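/- For the operator T = aB on ℓ²(ℕ), where B is the unilateral backward shift and a ∈ ℂ: T is diskcyclic if and only if |a| > 1. In particular, a scalar multiple of the unilateral backward shift is diskcyclic if and only if it is hypercyclic. -/

import Mathlib

open Filter Topology Pointwise

/-- The disk orbit of `x` under `T`: `{α • Tⁿ x : n ≥ 0, α ∈ ℂ, |α| ≤ 1}`. -/
def diskOrbit {H : Type*} [NormedAddCommGroup H] [NormedSpace ℂ H]
    (T : H →L[ℂ] H) (x : H) : Set H :=
  {y | ∃ (n : ℕ) (α : ℂ), ‖α‖ ≤ 1 ∧ y = α • (T ^ n) x}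

/-- An operator is diskcyclic if some vector has dense disk orbit. -/
def DiskCyclic {H : Type*} [NormedAddCommGroup H] [NormedSpace ℂ H]
    (T : H →L[ℂ] H) : Prop :=
  ∃ x : H, Dense (diskOrbit T x)

/-- `T` is hypercyclic if some vector has dense orbit. -/
def Hypercyclic {H : Type*} [NormedAddCommGroup H] [NormedSpace ℂ H]
    (T : H →L[ℂ] H) : Prop :=
  ∃ x : H, Dense {y | ∃ n : ℕ, y = (T ^ n) x}

open scoped ENNReal

noncomputable section RolewiczAux

abbrev Hl2 := lp (fun _ : ℕ => ℂ) 2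

lemma hl2_summable (f : Hl2) : Summable fun i => ‖(f : ∀ _ : ℕ, ℂ) i‖ ^ (2:ℝ) := by
  have h := lp.memℓp f
  rw [memℓp_gen_iff (by norm_num)] at h
  have h2 : ((2:ℝ≥0∞)).toReal = (2:ℝ) := by norm_num
  rw [h2] at h
  exact h

lemma hl2_norm_sq (f : Hl2) : ‖f‖ ^ (2:ℝ) = ∑' i, ‖(f : ∀ _ : ℕ, ℂ) i‖ ^ (2:ℝ) := by
  have h := lp.norm_rpow_eq_tsum (p := 2) (by norm_num) f
  have h2 : ((2:ℝ≥0∞)).toReal = (2:ℝ) := by norm_num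
  rwa [h2] at h

lemma hl2_norm_eq {f g : Hl2}
    (h : ∑' i, ‖(f : ∀ _ : ℕ, ℂ) i‖ ^ (2:ℝ) = ∑' i, ‖(g : ∀ _ : ℕ, ℂ) i‖ ^ (2:ℝ)) :
    ‖f‖ = ‖g‖ := by
  apply Real.rpow_left_injOn (x := (2:ℝ)) (by norm_num) (lp.norm_nonneg' f) (lp.norm_nonneg' g)
  simp only
  rw [hl2_norm_sq, hl2_norm_sq, h]

def shiftFun (N : ℕ) (f : ℕ → ℂ) : ℕ → ℂ := fun i => if i < N then 0 else f (i - N)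

lemma hasSum_shift {M : Type*} [AddCommMonoid M] [TopologicalSpace M] (g : ℕ → M) (N : ℕ)
    (s : M) : HasSum (fun i => if i < N then (0:M) else g (i - N)) s ↔ HasSum g s := by
  have inj : Function.Injective (fun i : ℕ => i + N) := add_left_injective N
  have vanish : ∀ x ∉ Set.range (fun i : ℕ => i + N),
      (if x < N then (0:M) else g (x - N)) = 0 := by
    intro x hx
    have hxN : x < N := by
      by_contra h
      exact hx ⟨x - N, show x - N + N = x by omega⟩
    simp [hxN]
  rw [← Function.Injective.hasSum_iff inj vanish]
  have he : ((fun x => if x < N then (0:M) else g (x - N)) ∘ fun i : ℕ => i + N) = g := by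
    funext i
    have : ¬ (i + N < N) := by omega
    simp [this]
  rw [he]

lemma summable_shift {M : Type*} [AddCommMonoid M] [TopologicalSpace M] (g : ℕ → M) (N : ℕ) :
    Summable (fun i => if i < N then (0:M) else g (i - N)) ↔ Summable g :=
  exists_congr fun s => hasSum_shift g N s

lemma tsum_shift {M : Type*} [AddCommMonoid M] [TopologicalSpace M] [T2Space M] (g : ℕ → M)
    (N : ℕ) : ∑' i, (if i < N then (0:M) else g (i - N)) = ∑' i, g i :=
  tsum_eq_tsum_of_hasSum_iff_hasSum fun {s} => hasSum_shift g N s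

lemma memℓp_shiftFun (f : Hl2) (N : ℕ) : Memℓp (shiftFun N f) 2 := by
  rw [memℓp_gen_iff (by norm_num)]
  have h2 : ((2:ℝ≥0∞)).toReal = (2:ℝ) := by norm_num
  rw [h2]
  have heq : (fun i => ‖shiftFun N (⇑f) i‖ ^ (2:ℝ))
      = fun i => if i < N then (0:ℝ) else ‖(f : ∀ _ : ℕ, ℂ) (i - N)‖ ^ (2:ℝ) := by
    funext i
    by_cases h : i < N
    · simp [shiftFun, h, Real.zero_rpow (by norm_num : (2:ℝ) ≠ 0)]
    · simp [shiftFun, h]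
  rw [heq]
  exact (summable_shift (fun j => ‖(f : ∀ _ : ℕ, ℂ) j‖ ^ (2:ℝ)) N).2 (hl2_summable f)

def shiftL (N : ℕ) (f : Hl2) : Hl2 := ⟨shiftFun N f, memℓp_shiftFun f N⟩

lemma shiftL_apply (N : ℕ) (f : Hl2) (i : ℕ) :
    (shiftL N f : ∀ _ : ℕ, ℂ) i = if i < N then 0 else (f : ∀ _ : ℕ, ℂ) (i - N) := rfl

lemma norm_shiftL (N : ℕ) (f : Hl2) : ‖shiftL N f‖ = ‖f‖ := by
  apply hl2_norm_eq
  have heq : (fun i => ‖(shiftL N f : ∀ _ : ℕ, ℂ) i‖ ^ (2:ℝ))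
      = fun i => if i < N then (0:ℝ) else ‖(f : ∀ _ : ℕ, ℂ) (i - N)‖ ^ (2:ℝ) := by
    funext i
    by_cases h : i < N
    · simp [shiftL_apply, h, Real.zero_rpow (by norm_num : (2:ℝ) ≠ 0)]
    · simp [shiftL_apply, h]
  rw [heq]
  exact tsum_shift (fun j => ‖(f : ∀ _ : ℕ, ℂ) j‖ ^ (2:ℝ)) N

lemma shiftL_zero (f : Hl2) : shiftL 0 f = f := by
  apply lp.ext
  funext i
  simp [shiftL_apply]


section OpAux
open scoped ENNReal

variable (a : ℂ) (B : Hl2 →L[ℂ] Hl2)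
    (hB : ∀ (x : Hl2) (n : ℕ), (B x : ∀ _ : ℕ, ℂ) n = (x : ∀ _ : ℕ, ℂ) (n + 1))

include hB

lemma smulB_apply (z : Hl2) (i : ℕ) :
    ((a • B) z : ∀ _ : ℕ, ℂ) i = a * (z : ∀ _ : ℕ, ℂ) (i + 1) := by
  rw [ContinuousLinearMap.smul_apply, lp.coeFn_smul, Pi.smul_apply, smul_eq_mul, hB]

lemma smulB_pow_apply (m : ℕ) (z : Hl2) (i : ℕ) :
    (((a • B) ^ m) z : ∀ _ : ℕ, ℂ) i = a ^ m * (z : ∀ _ : ℕ, ℂ) (i + m) := by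
  induction m generalizing i with
  | zero => simp
  | succ m ih =>
    have h1 : ((a • B) ^ (m + 1)) z = (a • B) (((a • B) ^ m) z) := by
      rw [pow_succ', ContinuousLinearMap.mul_apply]
    rw [h1, smulB_apply a B hB, ih]
    have : i + 1 + m = i + (m + 1) := by omega
    rw [this]
    ring

lemma Tpow_shiftL (m N : ℕ) (h : m ≤ N) (f : Hl2) :
    ((a • B) ^ m) (shiftL N f) = a ^ m • shiftL (N - m) f := by
  apply lp.ext
  funext i
  rw [smulB_pow_apply a B hB, lp.coeFn_smul, Pi.smul_apply, shiftL_apply, shiftL_apply, smul_eq_mul]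
  by_cases h1 : i + m < N
  · have h2 : i < N - m := by omega
    simp [h1, h2]
  · have h2 : ¬ (i < N - m) := by omega
    have h3 : i + m - N = i - (N - m) := by omega
    simp [h1, h2, h3]

lemma Tpow_shiftL_zero (m N M : ℕ) (f : Hl2) (hf : ∀ j, M ≤ j → (f : ∀ _ : ℕ, ℂ) j = 0)
    (h : N + M ≤ m) : ((a • B) ^ m) (shiftL N f) = 0 := by
  apply lp.ext
  funext i
  rw [smulB_pow_apply a B hB, shiftL_apply, lp.coeFn_zero, Pi.zero_apply]
  have h1 : ¬ (i + m < N) := by omega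
  rw [if_neg h1, hf _ (by omega), mul_zero]

lemma norm_B_le (z : Hl2) : ‖B z‖ ≤ ‖z‖ := by
  by_contra h
  push_neg at h
  have h2 : ‖z‖ ^ (2:ℝ) < ‖B z‖ ^ (2:ℝ) :=
    Real.rpow_lt_rpow (norm_nonneg _) h (by norm_num)
  have e1 : ‖B z‖ ^ (2:ℝ) = ∑' i, ‖(z : ∀ _ : ℕ, ℂ) (i + 1)‖ ^ (2:ℝ) := by
    rw [hl2_norm_sq]
    exact tsum_congr fun i => by rw [hB]
  have hs := hl2_summable z
  have e2 := Summable.sum_add_tsum_nat_add (f := fun i => ‖(z : ∀ _ : ℕ, ℂ) i‖ ^ (2:ℝ)) 1 hs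
  have e3 : (0:ℝ) ≤ ∑ i ∈ Finset.range 1, ‖(z : ∀ _ : ℕ, ℂ) i‖ ^ (2:ℝ) := by
    apply Finset.sum_nonneg
    intro i _
    positivity
  rw [hl2_norm_sq z] at h2
  rw [e1] at h2
  simp only at e2
  nlinarith [e2]

lemma orbit_norm_le (ha : ‖a‖ ≤ 1) (x : Hl2) (n : ℕ) : ‖((a • B) ^ n) x‖ ≤ ‖x‖ := by
  induction n with
  | zero => simp
  | succ n ih =>
    have h1 : ((a • B) ^ (n + 1)) x = (a • B) (((a • B) ^ n) x) := by
      rw [pow_succ', ContinuousLinearMap.mul_apply]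
    rw [h1, ContinuousLinearMap.smul_apply, norm_smul]
    calc ‖a‖ * ‖B (((a • B) ^ n) x)‖ ≤ 1 * ‖((a • B) ^ n) x‖ := by
          apply mul_le_mul ha (norm_B_le B hB _) (norm_nonneg _) zero_le_one
      _ ≤ ‖x‖ := by rw [one_mul]; exact ih

end OpAux

section DenseFamily
open scoped ENNReal

def ratC (q : ℚ × ℚ) : ℂ := ⟨(q.1 : ℝ), (q.2 : ℝ)⟩

lemma ratC_close (w : ℂ) {δ : ℝ} (hδ : 0 < δ) : ∃ q : ℚ × ℚ, ‖ratC q - w‖ < δ := by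
  obtain ⟨q1, h1⟩ := exists_rat_near w.re (half_pos hδ)
  obtain ⟨q2, h2⟩ := exists_rat_near w.im (half_pos hδ)
  refine ⟨(q1, q2), ?_⟩
  have hre : (ratC (q1, q2) - w).re = (q1:ℝ) - w.re := by simp [ratC, Complex.sub_re]
  have him : (ratC (q1, q2) - w).im = (q2:ℝ) - w.im := by simp [ratC, Complex.sub_im]
  calc ‖ratC (q1, q2) - w‖ ≤ |(ratC (q1, q2) - w).re| + |(ratC (q1, q2) - w).im| :=
        Complex.norm_le_abs_re_add_abs_im _
    _ < δ := by
        rw [hre, him, abs_sub_comm ((q1:ℝ)) w.re, abs_sub_comm ((q2:ℝ)) w.im]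
        linarith

lemma lp_single_sub (i : ℕ) (u v : ℂ) :
    lp.single (E := fun _ : ℕ => ℂ) 2 i (u - v) = lp.single 2 i u - lp.single 2 i v := by
  apply lp.ext
  funext j
  by_cases h : j = i
  · subst h
    rw [lp.coeFn_sub, Pi.sub_apply, lp.single_apply_self, lp.single_apply_self,
      lp.single_apply_self]
  · rw [lp.coeFn_sub, Pi.sub_apply, lp.single_apply_ne _ _ _ h, lp.single_apply_ne _ _ _ h,
      lp.single_apply_ne _ _ _ h, sub_zero]

def finVec (s : (n : ℕ) × (Fin n → ℚ × ℚ)) : Hl2 :=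
  ∑ i : Fin s.1, lp.single 2 (i : ℕ) (ratC (s.2 i))

lemma finVec_support (s : (n : ℕ) × (Fin n → ℚ × ℚ)) (j : ℕ) (hj : s.1 ≤ j) :
    (finVec s : ∀ _ : ℕ, ℂ) j = 0 := by
  rw [finVec, lp.coeFn_sum, Finset.sum_apply]
  apply Finset.sum_eq_zero
  intro i _
  exact lp.single_apply_ne 2 (i : ℕ) _ (by omega)

lemma finVec_dense (z : Hl2) {ε : ℝ} (hε : 0 < ε) :
    ∃ s : (n : ℕ) × (Fin n → ℚ × ℚ), ‖finVec s - z‖ < ε := by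
  have hsum := lp.hasSum_single (E := fun _ : ℕ => ℂ) (p := 2) (by norm_num) z
  have htend := hsum.tendsto_sum_nat
  rw [Metric.tendsto_atTop] at htend
  obtain ⟨n, hn⟩ := htend (ε / 2) (half_pos hε)
  have hpart : ‖(∑ i ∈ Finset.range n, lp.single 2 i ((z : ∀ _ : ℕ, ℂ) i)) - z‖ < ε / 2 := by
    have := hn n le_rfl
    rwa [dist_eq_norm] at this
  have hq : ∀ i : Fin n, ∃ q : ℚ × ℚ,
      ‖ratC q - (z : ∀ _ : ℕ, ℂ) (i : ℕ)‖ < ε / (2 * (n + 1)) := by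
    intro i
    exact ratC_close _ (by positivity)
  choose q hqlt using hq
  refine ⟨⟨n, q⟩, ?_⟩
  have key : finVec ⟨n, q⟩ - (∑ i ∈ Finset.range n, lp.single 2 i ((z : ∀ _ : ℕ, ℂ) i))
      = ∑ i : Fin n, lp.single 2 (i : ℕ) (ratC (q i) - (z : ∀ _ : ℕ, ℂ) (i : ℕ)) := by
    rw [finVec]
    rw [← Fin.sum_univ_eq_sum_range (fun i => lp.single (E := fun _ : ℕ => ℂ) 2 i
      ((z : ∀ _ : ℕ, ℂ) i)) n]
    rw [← Finset.sum_sub_distrib]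
    exact Finset.sum_congr rfl fun i _ => (lp_single_sub _ _ _).symm
  have hnorm1 : ‖finVec ⟨n, q⟩ - (∑ i ∈ Finset.range n, lp.single 2 i ((z : ∀ _ : ℕ, ℂ) i))‖
      ≤ ε / 2 := by
    rw [key]
    calc ‖∑ i : Fin n, lp.single (E := fun _ : ℕ => ℂ) 2 (i : ℕ)
          (ratC (q i) - (z : ∀ _ : ℕ, ℂ) (i : ℕ))‖
        ≤ ∑ i : Fin n, ‖lp.single (E := fun _ : ℕ => ℂ) 2 (i : ℕ)
          (ratC (q i) - (z : ∀ _ : ℕ, ℂ) (i : ℕ))‖ := norm_sum_le _ _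
      _ ≤ ∑ _i : Fin n, ε / (2 * (n + 1)) := by
          apply Finset.sum_le_sum
          intro i _
          have := lp.norm_single (E := fun _ : ℕ => ℂ) (p := 2) (by norm_num)
            (i : ℕ) (ratC (q i) - (z : ∀ _ : ℕ, ℂ) (i : ℕ))
          rw [this]
          exact (hqlt i).le
      _ = n * (ε / (2 * (n + 1))) := by rw [Finset.sum_const, Finset.card_univ]; simp
      _ ≤ ε / 2 := by
          rw [← mul_div_assoc]
          rw [div_le_div_iff₀ (by positivity) (by norm_num : (0:ℝ) < 2)]
          nlinarith [hε.le, Nat.cast_nonneg (α := ℝ) n]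
  calc ‖finVec ⟨n, q⟩ - z‖
      ≤ ‖finVec ⟨n, q⟩ - (∑ i ∈ Finset.range n, lp.single 2 i ((z : ∀ _ : ℕ, ℂ) i))‖
        + ‖(∑ i ∈ Finset.range n, lp.single 2 i ((z : ∀ _ : ℕ, ℂ) i)) - z‖ := by
        have := norm_sub_le_norm_sub_add_norm_sub (finVec ⟨n, q⟩)
          (∑ i ∈ Finset.range n, lp.single 2 i ((z : ∀ _ : ℕ, ℂ) i)) z
        exact this
    _ < ε / 2 + ε / 2 := by
        apply add_lt_add_of_le_of_lt hnorm1 hpart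
    _ = ε := by ring

lemma exists_dense_family : ∃ (y : ℕ → Hl2) (M : ℕ → ℕ),
    (∀ k j, M k ≤ j → (y k : ∀ _ : ℕ, ℂ) j = 0) ∧
    (∀ (z : Hl2) (ε : ℝ), 0 < ε → ∀ k₀ : ℕ, ∃ k, k₀ ≤ k ∧ ‖y k - z‖ < ε) := by
  obtain ⟨e, he⟩ := exists_surjective_nat ((n : ℕ) × (Fin n → ℚ × ℚ))
  refine ⟨fun k => finVec (e (Nat.unpair k).1), fun k => (e (Nat.unpair k).1).1, ?_, ?_⟩
  · intro k j hj
    exact finVec_support _ j hj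
  · intro z ε hε k₀
    obtain ⟨s, hs⟩ := finVec_dense z hε
    obtain ⟨m, hm⟩ := he s
    refine ⟨Nat.pair m k₀, Nat.right_le_pair m k₀, ?_⟩
    simpa [Nat.unpair_pair, hm] using hs

end DenseFamily

section Main
open scoped ENNReal

lemma inv_mul_mul_eq {x y c : ℝ} (hx : x ≠ 0) (hy : y ≠ 0) : (x * y)⁻¹ * x * c = c / y := by
  field_simp

lemma div_le_half_pow {c R : ℝ} (k : ℕ) (hc : 0 ≤ c) (hR : 2 ^ k * (c + 1) ≤ R) :
    c / R ≤ (1/2:ℝ) ^ k := by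
  have hRpos : (0:ℝ) < R := lt_of_lt_of_le (by positivity) hR
  rw [div_le_iff₀ hRpos]
  calc c ≤ (1/2:ℝ)^k * (2^k * (c+1)) := by
        have h : (1/2:ℝ)^k * ((2:ℝ)^k * (c+1)) = c + 1 := by
          rw [← mul_assoc, one_div, inv_pow, inv_mul_cancel₀ (by positivity : (0:ℝ) < 2^k).ne']
          ring
        rw [h]
        linarith
    _ ≤ (1/2:ℝ)^k * R := mul_le_mul_of_nonneg_left hR (by positivity)

variable (a : ℂ) (B : Hl2 →L[ℂ] Hl2)
    (hB : ∀ (x : Hl2) (n : ℕ), (B x : ∀ _ : ℕ, ℂ) n = (x : ∀ _ : ℕ, ℂ) (n + 1))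

include hB

set_option maxHeartbeats 2000000 in
lemma hyper (ha : 1 < ‖a‖) : Hypercyclic (a • B) := by
  obtain ⟨y, M, hsupp, hdense⟩ := exists_dense_family
  have ha0 : a ≠ 0 := by
    intro h
    rw [h] at ha
    norm_num at ha
  have hexp : ∀ k : ℕ, ∃ m : ℕ, (2:ℝ)^(k+1) * (‖y (k+1)‖ + 1) < ‖a‖ ^ m :=
    fun k => pow_unbounded_of_one_lt _ ha
  choose e he using hexp
  obtain ⟨N, hN0, hNsucc⟩ : ∃ N : ℕ → ℕ, N 0 = 0 ∧ ∀ k, N (k+1) = N k + M k + 1 + e k :=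
    ⟨fun k => Nat.rec 0 (fun k Nk => Nk + M k + 1 + e k) k, rfl, fun k => rfl⟩
  have hNmono : Monotone N := monotone_nat_of_le_succ (fun k => by rw [hNsucc]; omega)
  have hNbound : ∀ j k : ℕ, j < k → (2:ℝ)^k * (‖y k‖ + 1) ≤ ‖a‖ ^ (N k - N j) := by
    intro j k hjk
    obtain ⟨m, rfl⟩ : ∃ m, k = m + 1 := ⟨k - 1, by omega⟩
    have h1 : e m ≤ N (m+1) - N j := by
      have h2 := hNmono (show j ≤ m by omega)
      have h3 := hNsucc m
      omega
    calc (2:ℝ)^(m+1) * (‖y (m+1)‖ + 1) ≤ ‖a‖ ^ (e m) := (he m).le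
      _ ≤ ‖a‖ ^ (N (m+1) - N j) := pow_le_pow_right₀ ha.le h1
  obtain ⟨u, hudef⟩ : ∃ u : ℕ → Hl2, ∀ k, u k = (a ^ (N k))⁻¹ • shiftL (N k) (y k) :=
    ⟨fun k => (a ^ (N k))⁻¹ • shiftL (N k) (y k), fun k => rfl⟩
  have hnormu : ∀ k, ‖u k‖ = ‖y k‖ / ‖a‖ ^ (N k) := by
    intro k
    rw [hudef k, norm_smul, norm_inv, norm_pow, norm_shiftL, div_eq_inv_mul]
  have hubound : ∀ k, 1 ≤ k → ‖u k‖ ≤ (1/2:ℝ)^k := by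
    intro k hk
    rw [hnormu]
    apply div_le_half_pow k (norm_nonneg _)
    have h4 := hNbound 0 k (by omega)
    simpa [hN0] using h4
  have hu : Summable u := by
    apply Summable.of_norm_bounded_eventually (g := fun k => (1/2:ℝ)^k) summable_geometric_two
    rw [Nat.cofinite_eq_atTop]
    filter_upwards [Filter.eventually_ge_atTop 1] with k hk
    exact hubound k hk
  set x : Hl2 := ∑' k, u k with hx
  have hest : ∀ j : ℕ, ‖((a • B) ^ (N j)) x - y j‖ ≤ (1/2:ℝ)^j := by
    intro j
    set L : Hl2 →L[ℂ] Hl2 := (a • B) ^ (N j) with hL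
    have hg : Summable (fun k => L (u k)) := hu.map L L.continuous
    have hmap : L x = ∑' k, L (u k) := by
      rw [hx]
      exact L.map_tsum hu
    have hval0 : ∀ k, k < j → L (u k) = 0 := by
      intro k hk
      have hNle : N k + M k ≤ N j := by
        have h2 := hNmono (show k + 1 ≤ j by omega)
        have h3 := hNsucc k
        omega
      rw [hL, hudef k, ContinuousLinearMap.map_smul,
        Tpow_shiftL_zero a B hB (N j) (N k) (M k) (y k) (hsupp k) hNle, smul_zero]
    have hvalj : L (u j) = y j := by
      rw [hL, hudef j, ContinuousLinearMap.map_smul, Tpow_shiftL a B hB (N j) (N j) le_rfl,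
        Nat.sub_self, shiftL_zero, smul_smul, inv_mul_cancel₀ (pow_ne_zero _ ha0), one_smul]
    have hvalgt : ∀ k, j < k → ‖L (u k)‖ ≤ (1/2:ℝ)^k := by
      intro k hk
      have hNjk : N j ≤ N k := hNmono hk.le
      have heqL : L (u k) = ((a ^ (N k))⁻¹ * a ^ (N j)) • shiftL (N k - N j) (y k) := by
        rw [hL, hudef k, ContinuousLinearMap.map_smul, Tpow_shiftL a B hB (N j) (N k) hNjk,
          smul_smul]
      rw [heqL, norm_smul, norm_mul, norm_inv, norm_pow, norm_pow, norm_shiftL]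
      have hsplit : ‖a‖ ^ (N k) = ‖a‖ ^ (N j) * ‖a‖ ^ (N k - N j) := by
        rw [← pow_add]
        congr 1
        omega
      have hb := hNbound j k hk
      have heq2 : (‖a‖ ^ (N k))⁻¹ * ‖a‖ ^ (N j) * ‖y k‖ = ‖y k‖ / ‖a‖ ^ (N k - N j) := by
        rw [hsplit]
        exact inv_mul_mul_eq (by positivity) (by positivity)
      rw [heq2]
      exact div_le_half_pow k (norm_nonneg _) hb
    have hsplit2 := Summable.sum_add_tsum_nat_add (f := fun k => L (u k)) (j+1) hg
    have hhead : ∑ i ∈ Finset.range (j+1), L (u i) = y j := by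
      rw [Finset.sum_eq_single_of_mem j (Finset.self_mem_range_succ j)]
      · exact hvalj
      · intro i hi hij
        exact hval0 i (by rw [Finset.mem_range] at hi; omega)
    have htail_summable : Summable (fun n => ‖L (u (n + (j+1)))‖) :=
      Summable.of_nonneg_of_le (fun n => norm_nonneg _)
        (fun n => hvalgt (n + (j+1)) (by omega))
        ((summable_nat_add_iff (j+1)).2 summable_geometric_two)
    have hLx : L x - y j = ∑' n, L (u (n + (j+1))) := by
      rw [hmap, ← hsplit2, hhead]
      abel
    rw [hLx]
    calc ‖∑' n, L (u (n + (j+1)))‖ ≤ ∑' n, ‖L (u (n + (j+1)))‖ :=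
        norm_tsum_le_tsum_norm htail_summable
      _ ≤ ∑' n, (1/2:ℝ)^(n + (j+1)) := by
          apply Summable.tsum_le_tsum ?_ htail_summable
            ((summable_nat_add_iff (j+1)).2 summable_geometric_two)
          intro n
          exact hvalgt (n + (j+1)) (by omega)
      _ = (1/2:ℝ)^j := by
          have hc : ∀ n : ℕ, (1/2:ℝ)^(n + (j+1)) = (1/2:ℝ)^n * (1/2:ℝ)^(j+1) :=
            fun n => pow_add _ _ _
          rw [tsum_congr hc, tsum_mul_right, tsum_geometric_two, pow_succ]
          ring
  refine ⟨x, ?_⟩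
  rw [Metric.dense_iff]
  intro z ε hε
  obtain ⟨t, ht⟩ := exists_pow_lt_of_lt_one (half_pos hε) (by norm_num : (1/2:ℝ) < 1)
  obtain ⟨k, hkt, hkz⟩ := hdense z (ε/2) (half_pos hε) t
  refine ⟨((a • B) ^ (N k)) x, ?_, ⟨N k, rfl⟩⟩
  rw [Metric.mem_ball, dist_eq_norm]
  calc ‖((a • B) ^ (N k)) x - z‖
      ≤ ‖((a • B) ^ (N k)) x - y k‖ + ‖y k - z‖ := norm_sub_le_norm_sub_add_norm_sub _ _ _
    _ ≤ (1/2:ℝ)^k + ε/2 := add_le_add (hest k) hkz.le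
    _ ≤ (1/2:ℝ)^t + ε/2 := by
        have := pow_le_pow_of_le_one (by norm_num : (0:ℝ) ≤ 1/2) (by norm_num : (1/2:ℝ) ≤ 1) hkt
        linarith
    _ < ε := by linarith

lemma not_diskcyclic (ha : ‖a‖ ≤ 1) : ¬ DiskCyclic (a • B) := by
  rintro ⟨x, hx⟩
  set y₀ : Hl2 := ((‖x‖ + 2 : ℝ) : ℂ) • lp.single 2 0 (1:ℂ) with hy₀
  have hny : ‖y₀‖ = ‖x‖ + 2 := by
    rw [hy₀, norm_smul]
    have h1 : ‖lp.single (E := fun _ : ℕ => ℂ) 2 0 (1:ℂ)‖ = 1 := by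
      have h2 := lp.norm_single (E := fun _ : ℕ => ℂ) (p := 2) (by norm_num) 0 (1:ℂ)
      rw [h2]
      simp
    rw [h1, mul_one, Complex.norm_real, Real.norm_eq_abs, abs_of_nonneg (by positivity)]
  obtain ⟨w, hw⟩ := (Metric.dense_iff.1 hx) y₀ 1 one_pos
  obtain ⟨n, α, hα, rfl⟩ := hw.2
  have hwn : ‖α • ((a • B) ^ n) x‖ ≤ ‖x‖ := by
    rw [norm_smul]
    calc ‖α‖ * ‖((a • B) ^ n) x‖ ≤ 1 * ‖x‖ :=
        mul_le_mul hα (orbit_norm_le a B hB ha x n) (norm_nonneg _) zero_le_one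
      _ = ‖x‖ := one_mul _
  have hd : dist (α • ((a • B) ^ n) x) y₀ < 1 := Metric.mem_ball.1 hw.1
  rw [dist_eq_norm] at hd
  have h5 : ‖y₀‖ - ‖α • ((a • B) ^ n) x‖ ≤ ‖α • ((a • B) ^ n) x - y₀‖ := by
    rw [norm_sub_rev]
    exact norm_sub_norm_le _ _
  rw [hny] at h5
  linarith

end Main

theorem stmt16 (a : ℂ)
    (B : lp (fun _ : ℕ => ℂ) 2 →L[ℂ] lp (fun _ : ℕ => ℂ) 2)
    (hB : ∀ (x : lp (fun _ : ℕ => ℂ) 2) (n : ℕ),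
      (B x : ∀ _ : ℕ, ℂ) n = (x : ∀ _ : ℕ, ℂ) (n + 1)) :
    (DiskCyclic (a • B) ↔ 1 < ‖a‖) ∧ (DiskCyclic (a • B) ↔ Hypercyclic (a • B)) := by
  have hyp_of : 1 < ‖a‖ → Hypercyclic (a • B) := hyper a B hB
  have disk_of_hyp : Hypercyclic (a • B) → DiskCyclic (a • B) := by
    rintro ⟨x, hx⟩
    refine ⟨x, hx.mono ?_⟩
    rintro w ⟨n, rfl⟩
    exact ⟨n, 1, by simp, (one_smul ℂ _).symm⟩
  have h1 : DiskCyclic (a • B) ↔ 1 < ‖a‖ := by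
    constructor
    · intro h
      by_contra hle
      push_neg at hle
      exact not_diskcyclic a B hB hle h
    · intro h
      exact disk_of_hyp (hyp_of h)
  exact ⟨h1, ⟨fun h => hyp_of (h1.1 h), disk_of_hyp⟩⟩

end RolewiczAux
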